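/- arXiv:2002.03978 — 3 statements merged into one kernel-verified Lean document; each statement's English description precedes it below -/
import Mathlib

section
/- For any matrix A ∈ ℝ^{N×N}, there exist an integer q with 0 ≤ q ≤ N, an invertible matrix P ∈ ℝ^{N×N}, an invertible matrix J ∈ ℝ^{q×q}, an integer n ≥ 0, and matrices P_{(0)} ∈ ℝ^{q×N}, P_{(1)},…,P_{(n)} ∈ ℝ^{N×N} such that: (a) P equals the matrix whose first q rows are P_{(0)} and remaining rows zero, plus Σ_{i=1}^n P_{(i)}; (b) rank(P_{(0)}) = q and P_{(0)}A^k = J^k P_{(0)} for all k ≥ 0; (c) for each 1 ≤ i ≤ n, rank(P_{(i)}) = rank(P_{(i)}A^{i−1}) ≤ N − rank(A) and P_{(i)}A^k = 0 for all k ≥ i. -/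
open Matrix

section JordanHelpers
open Matrix Submodule

variable {N : ℕ}

private lemma ker_pow_mono (g : Module.End ℝ (Fin N → ℝ)) {a b : ℕ} (hab : a ≤ b) :
    LinearMap.ker (g ^ a) ≤ LinearMap.ker (g ^ b) := by
  obtain ⟨k, rfl⟩ := Nat.exists_eq_add_of_le hab
  intro x hx
  rw [LinearMap.mem_ker] at hx ⊢
  rw [add_comm, pow_add, Module.End.mul_apply, hx, map_zero]

private lemma vecMulLinear_pow (A : Matrix (Fin N) (Fin N) ℝ) (k : ℕ) (x : Fin N → ℝ) :
    (A.vecMulLinear ^ k) x = x ᵥ* (A ^ k) := by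
  induction k with
  | zero => simp
  | succ k ih =>
      rw [pow_succ', Module.End.mul_apply, ih, Matrix.vecMulLinear_apply,
        Matrix.vecMul_vecMul, ← pow_succ]

private lemma row_of_mul {q : ℕ} (M : Matrix (Fin q) (Fin N) ℝ) (B : Matrix (Fin N) (Fin N) ℝ)
    (r : Fin q) : (M * B) r = M r ᵥ* B := by
  funext c
  simp [Matrix.mul_apply, Matrix.vecMul, dotProduct]

private lemma exists_filtration_basis (g : Module.End ℝ (Fin N → ℝ)) (M : ℕ) :
    ∃ (m : ℕ) (u : Fin m → (Fin N → ℝ)) (ht : Fin m → ℕ),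
      LinearIndependent ℝ u ∧ (∀ j, 1 ≤ ht j ∧ ht j ≤ M) ∧
      (∀ j, u j ∈ LinearMap.ker (g ^ (ht j))) ∧
      ∀ i ≤ M, span ℝ (u '' {j | ht j ≤ i}) = LinearMap.ker (g ^ i) := by
  induction M with
  | zero =>
      refine ⟨0, Fin.elim0, Fin.elim0, linearIndependent_empty_type, fun j => j.elim0,
        fun j => j.elim0, fun i hi => ?_⟩
      interval_cases i
      have : (Fin.elim0 '' {j : Fin 0 | Fin.elim0 j ≤ 0}) = (∅ : Set (Fin N → ℝ)) := by
        ext x; simp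
      rw [this, span_empty, pow_zero]
      exact (LinearMap.ker_id).symm
  | succ M ihM =>
      obtain ⟨m, u, ht, hind, hbound, hmem, hspan⟩ := ihM
      set Km := LinearMap.ker (g ^ M) with hKm
      set Km1 := LinearMap.ker (g ^ (M + 1)) with hKm1
      have hle : Km ≤ Km1 := ker_pow_mono g (Nat.le_succ M)
      obtain ⟨C, hC⟩ := Submodule.exists_isCompl Km
      set D := C ⊓ Km1 with hD
      have hsup : Km ⊔ D = Km1 := by
        rw [hD, ← sup_inf_assoc_of_le _ hle, hC.sup_eq_top, top_inf_eq]
      have hdisj : Disjoint Km D := hC.disjoint.mono_right inf_le_left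
      set d := Module.finrank ℝ D with hd
      let uD : Module.Basis (Fin d) ℝ D := Module.finBasis ℝ D
      set c : Fin d → (Fin N → ℝ) := fun j => (uD j : Fin N → ℝ) with hc
      have hindc : LinearIndependent ℝ c := uD.linearIndependent.map' D.subtype (ker_subtype D)
      have hspanu : span ℝ (Set.range u) = Km := by
        have h1 : {j : Fin m | ht j ≤ M} = Set.univ := by
          ext j; simp [(hbound j).2]
        have := hspan M le_rfl
        rwa [h1, Set.image_univ] at this
      have hspanc : span ℝ (Set.range c) = D := by
        have h1 : Set.range c = D.subtype '' (Set.range uD) := by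
          rw [← Set.range_comp]; rfl
        rw [h1, Submodule.span_image, uD.span_eq, Submodule.map_subtype_top]
      have hinds : LinearIndependent ℝ (Sum.elim u c) :=
        hind.sum_type hindc (by rw [hspanu, hspanc]; exact hdisj)
      refine ⟨m + d, (Sum.elim u c) ∘ finSumFinEquiv.symm,
        (Sum.elim ht (fun _ => M + 1)) ∘ finSumFinEquiv.symm,
        hinds.comp _ finSumFinEquiv.symm.injective, ?_, ?_, ?_⟩
      · intro r
        rcases hr : finSumFinEquiv.symm r with j | j
        · simp only [Function.comp_apply, hr, Sum.elim_inl]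
          exact ⟨(hbound j).1, (hbound j).2.trans (Nat.le_succ M)⟩
        · simp only [Function.comp_apply, hr, Sum.elim_inr]
          omega
      · intro r
        rcases hr : finSumFinEquiv.symm r with j | j
        · simp only [Function.comp_apply, hr, Sum.elim_inl]
          exact hmem j
        · simp only [Function.comp_apply, hr, Sum.elim_inr]
          exact (Submodule.mem_inf.mp (uD j).2).2
      · intro i hi
        refine le_antisymm ?_ ?_
        · rw [span_le]
          rintro x ⟨r, hr, rfl⟩
          rcases hrr : finSumFinEquiv.symm r with j | j <;>
            simp only [Set.mem_setOf_eq, Function.comp_apply, hrr, Sum.elim_inl,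
              Sum.elim_inr] at hr ⊢
          · exact ker_pow_mono g hr (hmem j)
          · exact ker_pow_mono g hr (Submodule.mem_inf.mp (uD j).2).2
        · by_cases his : i ≤ M
          · rw [← hspan i his]
            rw [span_le]
            rintro x ⟨j, hj, rfl⟩
            apply subset_span
            refine ⟨finSumFinEquiv (Sum.inl j), ?_, ?_⟩ <;>
              simp only [Set.mem_setOf_eq, Function.comp_apply, Equiv.symm_apply_apply,
                Sum.elim_inl]
            · exact hj
          · have : i = M + 1 := by omega
            subst this
            rw [← hKm1, ← hsup]
            apply sup_le
            · rw [hKm, ← hspan M le_rfl, span_le]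
              rintro x ⟨j, hj, rfl⟩
              apply subset_span
              refine ⟨finSumFinEquiv (Sum.inl j), ?_, ?_⟩ <;>
                simp only [Set.mem_setOf_eq, Function.comp_apply, Equiv.symm_apply_apply,
                  Sum.elim_inl]
              · exact (hbound j).2.trans (Nat.le_succ M)
            · rw [← hspanc, span_le]
              rintro x ⟨j, rfl⟩
              apply subset_span
              refine ⟨finSumFinEquiv (Sum.inr j), ?_, ?_⟩ <;>
                simp only [Set.mem_setOf_eq, Function.comp_apply, Equiv.symm_apply_apply,
                  Sum.elim_inr, le_refl]

end JordanHelpers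

set_option maxHeartbeats 1000000 in
/-- Jordan-type decomposition of `P`: for any `A ∈ ℝ^{N×N}` there are
`q ≤ N`, an invertible `P ∈ ℝ^{N×N}`, an invertible `J ∈ ℝ^{q×q}`, `n ≥ 0`, and matrices
`P₀ ∈ ℝ^{q×N}`, `P₍₁₎,…,P₍ₙ₎ ∈ ℝ^{N×N}` satisfying (a), (b), (c) of Lemma 1. -/
theorem jordan_type_decomposition {N : ℕ} (A : Matrix (Fin N) (Fin N) ℝ) :
    ∃ (q : ℕ) (_ : q ≤ N) (P : Matrix (Fin N) (Fin N) ℝ)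
      (J : Matrix (Fin q) (Fin q) ℝ) (n : ℕ)
      (P0 : Matrix (Fin q) (Fin N) ℝ) (Ps : Fin n → Matrix (Fin N) (Fin N) ℝ),
      IsUnit P ∧ IsUnit J ∧
      P = (Matrix.of fun (i : Fin N) (j : Fin N) => if h : (i : ℕ) < q then P0 ⟨i, h⟩ j else 0) + ∑ i, Ps i ∧
      P0.rank = q ∧ (∀ k : ℕ, P0 * A ^ k = J ^ k * P0) ∧
      (∀ i : Fin n,
        (Ps i).rank = (Ps i * A ^ (i : ℕ)).rank ∧
        (Ps i).rank ≤ N - A.rank ∧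
        ∀ k : ℕ, (i : ℕ) + 1 ≤ k → Ps i * A ^ k = 0) := by
  classical
  set g : Module.End ℝ (Fin N → ℝ) := A.vecMulLinear with hg
  obtain ⟨a, ha⟩ := Filter.eventually_atTop.mp (LinearMap.eventually_isCompl_ker_pow_range_pow g)
  obtain ⟨M, hM, hM1⟩ : ∃ M, IsCompl (LinearMap.ker (g ^ M)) (LinearMap.range (g ^ M)) ∧ 1 ≤ M :=
    ⟨max a 1, ha (max a 1) (le_max_left a 1), le_max_right a 1⟩
  set W := LinearMap.range (g ^ M) with hWdef
  set q := Module.finrank ℝ W with hqdef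
  let wB : Module.Basis (Fin q) ℝ W := Module.finBasis ℝ W
  set wrow : Fin q → (Fin N → ℝ) := fun j => (wB j : Fin N → ℝ) with hwrow
  obtain ⟨m, u, ht, hind, hbound, hmem, hspan⟩ := exists_filtration_basis g M
  have hspanu : Submodule.span ℝ (Set.range u) = LinearMap.ker (g ^ M) := by
    have h1 : {j : Fin m | ht j ≤ M} = Set.univ := by ext j; simp [(hbound j).2]
    have h2 := hspan M le_rfl
    rwa [h1, Set.image_univ] at h2
  have hspanw : Submodule.span ℝ (Set.range wrow) = W := by
    have h1 : Set.range wrow = W.subtype '' (Set.range wB) := by rw [← Set.range_comp]; rfl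
    rw [h1, Submodule.span_image, wB.span_eq, Submodule.map_subtype_top]
  have hindw : LinearIndependent ℝ wrow :=
    wB.linearIndependent.map' W.subtype (Submodule.ker_subtype W)
  have hinds : LinearIndependent ℝ (Sum.elim wrow u) :=
    hindw.sum_type hind (by rw [hspanw, hspanu]; exact hM.disjoint.symm)
  have hspans : ⊤ ≤ Submodule.span ℝ (Set.range (Sum.elim wrow u)) := by
    rw [Set.Sum.elim_range, Submodule.span_union, hspanw, hspanu, sup_comm]
    exact (codisjoint_iff.mp hM.codisjoint).ge
  let Bs : Module.Basis (Fin q ⊕ Fin m) ℝ (Fin N → ℝ) := Module.Basis.mk hinds hspans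
  have hqm : q + m = N := by
    have h1 := Module.finrank_eq_card_basis Bs
    rw [Module.finrank_fintype_fun_eq_card] at h1
    simpa using h1.symm
  have hq : q ≤ N := by omega
  have hidx : ∀ (r : Fin N), ¬((r : ℕ) < q) → (r : ℕ) - q < m := fun r hr => by
    have := r.isLt; omega
  -- the matrices
  let P0 : Matrix (Fin q) (Fin N) ℝ := Matrix.of fun j c => wrow j c
  let P : Matrix (Fin N) (Fin N) ℝ := Matrix.of fun r c =>
    if hr : (r : ℕ) < q then wrow ⟨r, hr⟩ c else u ⟨(r : ℕ) - q, hidx r hr⟩ c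
  let Ps : Fin M → Matrix (Fin N) (Fin N) ℝ := fun i => Matrix.of fun r c =>
    if hr : (r : ℕ) < q then 0 else
      if ht ⟨(r : ℕ) - q, hidx r hr⟩ = (i : ℕ) + 1 then u ⟨(r : ℕ) - q, hidx r hr⟩ c else 0
  -- the invertible part
  have hWg : ∀ x ∈ W, g x ∈ W := by
    rintro x ⟨y, rfl⟩
    exact ⟨g y, by rw [← Module.End.mul_apply, ← pow_succ, pow_succ', Module.End.mul_apply]⟩
  let gW : W →ₗ[ℝ] W := g.restrict hWg
  have hgWinj : Function.Injective gW := by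
    rw [← LinearMap.ker_eq_bot, Submodule.eq_bot_iff]
    rintro x hx
    have hx0 : g (x : Fin N → ℝ) = 0 := by
      have := congrArg (Subtype.val) (LinearMap.mem_ker.mp hx)
      exact this
    have h1 : (x : Fin N → ℝ) ∈ LinearMap.ker (g ^ M) := by
      apply ker_pow_mono g hM1
      rwa [LinearMap.mem_ker, pow_one]
    have h2 : (x : Fin N → ℝ) ∈ (⊥ : Submodule ℝ (Fin N → ℝ)) :=
      hM.disjoint.le_bot ⟨h1, x.2⟩
    exact Subtype.ext h2
  have hgWbij : Function.Bijective gW :=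
    ⟨hgWinj, (LinearMap.injective_iff_surjective).mp hgWinj⟩
  let eW : W ≃ₗ[ℝ] W := LinearEquiv.ofBijective gW hgWbij
  let J : Matrix (Fin q) (Fin q) ℝ := (LinearMap.toMatrix wB wB gW)ᵀ
  have hJmul : (LinearMap.toMatrix wB wB gW) * (LinearMap.toMatrix wB wB (eW.symm : W →ₗ[ℝ] W)) = 1 := by
    rw [← LinearMap.toMatrix_comp]
    have : gW.comp (eW.symm : W →ₗ[ℝ] W) = LinearMap.id := by
      refine LinearMap.ext fun x => ?_
      show gW (eW.symm x) = x
      exact eW.apply_symm_apply x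
    rw [this, LinearMap.toMatrix_id]
  have hJunit : IsUnit J := by
    have h2 : IsUnit (LinearMap.toMatrix wB wB gW) :=
      @isUnit_of_invertible _ _ _ (invertibleOfRightInverse _ _ hJmul)
    rw [Matrix.isUnit_iff_isUnit_det] at h2 ⊢
    rwa [Matrix.det_transpose]
  -- P0 * A = J * P0
  have hP0A : P0 * A = J * P0 := by
    ext j c
    rw [Matrix.mul_apply, Matrix.mul_apply]
    have hL : ∑ k, P0 j k * A k c = g (wrow j) c := by
      simp [hg, Matrix.vecMulLinear_apply, Matrix.vecMul, dotProduct, P0]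
    have hR : ∑ k, J j k * P0 k c = ∑ k, (wB.repr (gW (wB j)) k) • wrow k c := by
      apply Finset.sum_congr rfl
      intro k _
      simp [J, LinearMap.toMatrix_apply, P0, smul_eq_mul, Matrix.transpose_apply]
    rw [hL, hR]
    have h3 : g (wrow j) = ((gW (wB j) : W) : Fin N → ℝ) := rfl
    have h4 : ((gW (wB j) : W) : Fin N → ℝ) = ∑ k, (wB.repr (gW (wB j)) k) • wrow k := by
      conv_lhs => rw [← wB.sum_repr (gW (wB j))]
      push_cast
      simp [hwrow]
    rw [h3, h4, Finset.sum_apply]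
    simp
  have hP0Ak : ∀ k : ℕ, P0 * A ^ k = J ^ k * P0 := by
    intro k
    induction k with
    | zero => simp
    | succ k ih =>
        calc P0 * A ^ (k + 1) = (P0 * A ^ k) * A := by rw [pow_succ, Matrix.mul_assoc]
          _ = J ^ k * (P0 * A) := by rw [ih, Matrix.mul_assoc]
          _ = J ^ k * (J * P0) := by rw [hP0A]
          _ = J ^ (k + 1) * P0 := by rw [← Matrix.mul_assoc, ← pow_succ]
  have hrankP0 : P0.rank = q := by
    rw [Matrix.rank_eq_finrank_span_row, Matrix.row_def]
    have h1 : Set.range P0 = Set.range wrow := rfl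
    rw [h1, hspanw]
  -- invertibility of P
  let e' : Fin q ⊕ Fin m ≃ Fin N := finSumFinEquiv.trans (finCongr hqm)
  have hcl : ∀ j : Fin q, ((e' (Sum.inl j)) : ℕ) = (j : ℕ) := by intro j; simp [e']
  have hcr : ∀ j : Fin m, ((e' (Sum.inr j)) : ℕ) = q + (j : ℕ) := by intro j; simp [e']
  have hProw : ∀ t, (fun r => P r) (e' t) = Sum.elim wrow u t := by
    rintro (j | j) <;> funext c
    · have h1 : ((e' (Sum.inl j)) : ℕ) < q := by rw [hcl]; exact j.isLt
      show P (e' (Sum.inl j)) c = wrow j c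
      show dite _ _ _ = _
      rw [dif_pos h1]
      exact congrFun (congrArg wrow (Fin.ext (hcl j))) c
    · have h1 : ¬ ((e' (Sum.inr j)) : ℕ) < q := by rw [hcr]; omega
      show P (e' (Sum.inr j)) c = u j c
      show dite _ _ _ = _
      rw [dif_neg h1]
      refine congrFun (congrArg u (Fin.ext ?_)) c
      show ((e' (Sum.inr j)) : ℕ) - q = (j : ℕ)
      rw [hcr]; omega
  have hBv : ⇑(Bs.reindex e') = fun r => P r := by
    funext r
    rw [Module.Basis.reindex_apply]
    have h0 : Bs (e'.symm r) = Sum.elim wrow u (e'.symm r) := by rw [Module.Basis.mk_apply]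
    rw [h0, ← hProw (e'.symm r), Equiv.apply_symm_apply]
  have hPunit : IsUnit P := by
    have h1 : (Pi.basisFun ℝ (Fin N)).toMatrix (⇑(Bs.reindex e')) = Pᵀ := by
      ext i j
      rw [Module.Basis.toMatrix_apply, Pi.basisFun_repr, hBv]
      rfl
    have h2 := (Pi.basisFun ℝ (Fin N)).invertibleToMatrix (Bs.reindex e')
    rw [h1] at h2
    have h3 : IsUnit Pᵀ := @isUnit_of_invertible _ _ _ h2
    rw [Matrix.isUnit_iff_isUnit_det, Matrix.det_transpose,
      ← Matrix.isUnit_iff_isUnit_det] at h3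
    exact h3
  -- decomposition equation
  have hPsum : P = (Matrix.of fun (i : Fin N) (j : Fin N) =>
      if h : (i : ℕ) < q then P0 ⟨i, h⟩ j else 0) + ∑ i, Ps i := by
    ext r c
    rw [Matrix.add_apply, Matrix.sum_apply]
    by_cases hr : (r : ℕ) < q
    · show dite _ _ _ = dite _ _ _ + _
      rw [dif_pos hr, dif_pos hr]
      have hz : ∀ i : Fin M, Ps i r c = 0 := by
        intro i
        show dite _ _ _ = 0
        rw [dif_pos hr]
      rw [Finset.sum_congr rfl (fun i _ => hz i), Finset.sum_const_zero, add_zero]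
      rfl
    · show dite _ _ _ = dite _ _ _ + _
      rw [dif_neg hr, dif_neg hr, zero_add]
      have key : ∀ j : Fin m, (∑ i : Fin M, (if ht j = (i : ℕ) + 1 then u j c else 0)) = u j c := by
        intro j
        have hb := hbound j
        have hsum : ∀ i : Fin M, (if ht j = (i : ℕ) + 1 then u j c else 0) =
            if i = (⟨ht j - 1, by omega⟩ : Fin M) then u j c else 0 := by
          intro i
          congr 1
          rw [eq_iff_iff]
          constructor
          · intro h
            exact Fin.ext (show (i : ℕ) = ht j - 1 by omega)
          · intro h
            subst h
            show ht j = ht j - 1 + 1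
            omega
        rw [Finset.sum_congr rfl (fun i _ => hsum i),
          Finset.sum_ite_eq' Finset.univ _ (fun _ => u j c), if_pos (Finset.mem_univ _)]
      have hterm : ∀ i : Fin M, Ps i r c =
          if ht ⟨(r : ℕ) - q, hidx r hr⟩ = (i : ℕ) + 1 then u ⟨(r : ℕ) - q, hidx r hr⟩ c else 0 := by
        intro i
        show dite _ _ _ = _
        rw [dif_neg hr]
      rw [Finset.sum_congr rfl (fun i _ => hterm i), key ⟨(r : ℕ) - q, hidx r hr⟩]
  -- properties of the nilpotent blocks
  have hPsprop : ∀ i : Fin M,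
      (Ps i).rank = (Ps i * A ^ (i : ℕ)).rank ∧
      (Ps i).rank ≤ N - A.rank ∧
      ∀ k : ℕ, (i : ℕ) + 1 ≤ k → Ps i * A ^ k = 0 := by
    intro i
    set S : Set (Fin N → ℝ) := u '' {j | ht j = (i : ℕ) + 1} with hS
    have hSK : Submodule.span ℝ S ≤ LinearMap.ker (g ^ ((i : ℕ) + 1)) := by
      rw [Submodule.span_le]
      rintro x ⟨j, hj, rfl⟩
      have := hmem j
      rwa [Set.mem_setOf_eq.mp hj] at this
    have hrows : ∀ r, Ps i r ∈ Submodule.span ℝ S := by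
      intro r
      by_cases hr : (r : ℕ) < q
      · have hz : Ps i r = 0 := funext fun c => by show dite _ _ _ = 0; rw [dif_pos hr]
        rw [hz]; exact Submodule.zero_mem _
      · by_cases hcond : ht ⟨(r : ℕ) - q, hidx r hr⟩ = (i : ℕ) + 1
        · have hz : Ps i r = u ⟨(r : ℕ) - q, hidx r hr⟩ := funext fun c => by
            show dite _ _ _ = _
            rw [dif_neg hr, if_pos hcond]
          rw [hz]
          exact Submodule.subset_span ⟨_, hcond, rfl⟩
        · have hz : Ps i r = 0 := funext fun c => by
            show dite _ _ _ = 0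
            rw [dif_neg hr, if_neg hcond]
          rw [hz]; exact Submodule.zero_mem _
    have hspanPs : Submodule.span ℝ (Set.range (Ps i)) = Submodule.span ℝ S := by
      refine le_antisymm (Submodule.span_le.mpr ?_) (Submodule.span_le.mpr ?_)
      · rintro x ⟨r, rfl⟩; exact hrows r
      · rintro x ⟨j, hj, rfl⟩
        apply Submodule.subset_span
        have hjlt : q + (j : ℕ) < N := by have := j.isLt; omega
        refine ⟨⟨q + (j : ℕ), hjlt⟩, ?_⟩
        funext c
        have hge : ¬ (((⟨q + (j : ℕ), hjlt⟩ : Fin N)) : ℕ) < q := by simp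
        show dite _ _ _ = _
        rw [dif_neg hge]
        have hval : (⟨((⟨q + (j : ℕ), hjlt⟩ : Fin N) : ℕ) - q,
            hidx _ hge⟩ : Fin m) = j := Fin.ext (by show q + (j : ℕ) - q = (j : ℕ); omega)
        have hj' : ht j = (i : ℕ) + 1 := hj
        rw [hval, if_pos hj']
    have hrowsk : ∀ (k : ℕ) (r : Fin N), (Ps i * A ^ k) r = (g ^ k) (Ps i r) := by
      intro k r
      rw [row_of_mul, hg, vecMulLinear_pow]
    have hrankPs : (Ps i).rank = Module.finrank ℝ (Submodule.span ℝ S) := by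
      rw [Matrix.rank_eq_finrank_span_row, Matrix.row_def, hspanPs]
    have hmapeq : Submodule.span ℝ (Set.range (Ps i * A ^ (i : ℕ))) =
        Submodule.map (g ^ (i : ℕ)) (Submodule.span ℝ (Set.range (Ps i))) := by
      have h1 : (fun r => (Ps i * A ^ (i : ℕ)) r) = (g ^ (i : ℕ)) ∘ (fun r => Ps i r) :=
        funext (hrowsk (i : ℕ))
      show Submodule.span ℝ (Set.range (fun r => (Ps i * A ^ (i : ℕ)) r)) = _
      rw [h1, Set.range_comp, Submodule.span_image]
    have hdisjK : Disjoint (Submodule.span ℝ S) (LinearMap.ker (g ^ (i : ℕ))) := by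
      rw [← hspan (i : ℕ) (le_of_lt i.isLt)]
      exact hind.disjoint_span_image (by
        rw [Set.disjoint_left]
        intro j hj1 hj2
        simp only [Set.mem_setOf_eq] at hj1 hj2
        omega)
    have hfr : Module.finrank ℝ (Submodule.map (g ^ (i : ℕ)) (Submodule.span ℝ S)) =
        Module.finrank ℝ (Submodule.span ℝ S) := by
      set f := (g ^ (i : ℕ)).domRestrict (Submodule.span ℝ S) with hf
      have h1 : LinearMap.range f = Submodule.map (g ^ (i : ℕ)) (Submodule.span ℝ S) :=
        LinearMap.range_domRestrict _ _
      have h2 : LinearMap.ker f = ⊥ := by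
        rw [Submodule.eq_bot_iff]
        rintro ⟨x, hx⟩ hfx
        have hx0 : (g ^ (i : ℕ)) x = 0 := LinearMap.mem_ker.mp hfx
        have : x ∈ (⊥ : Submodule ℝ (Fin N → ℝ)) :=
          hdisjK.le_bot ⟨hx, LinearMap.mem_ker.mpr hx0⟩
        exact Subtype.ext this
      have h3 := LinearMap.finrank_range_add_finrank_ker f
      rw [h1, h2, finrank_bot, add_zero] at h3
      exact h3
    have hrankProd : (Ps i * A ^ (i : ℕ)).rank = Module.finrank ℝ (Submodule.span ℝ S) := by
      rw [Matrix.rank_eq_finrank_span_row, Matrix.row_def, hmapeq, hspanPs, hfr]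
    refine ⟨by rw [hrankPs, hrankProd], ?_, ?_⟩
    · -- rank bound
      have hmapker : Submodule.map (g ^ (i : ℕ)) (Submodule.span ℝ S) ≤ LinearMap.ker g := by
        rintro y ⟨x, hx, rfl⟩
        rw [LinearMap.mem_ker, ← Module.End.mul_apply, ← pow_succ']
        exact LinearMap.mem_ker.mp (hSK hx)
      have hkerg : Module.finrank ℝ (LinearMap.ker g) = N - A.rank := by
        have h1 := LinearMap.finrank_range_add_finrank_ker g
        have h2 : Module.finrank ℝ (LinearMap.range g) = A.rank := by
          rw [hg, range_vecMulLinear, ← Matrix.rank_eq_finrank_span_row]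
        rw [h2, Module.finrank_fintype_fun_eq_card, Fintype.card_fin] at h1
        omega
      have h4 : (Ps i).rank ≤ Module.finrank ℝ (LinearMap.ker g) := by
        rw [hrankPs, ← hfr]
        exact Submodule.finrank_mono hmapker
      rw [hkerg] at h4
      exact h4
    · intro k hk
      ext r c
      have h5 : (Ps i * A ^ k) r = 0 := by
        rw [hrowsk k r]
        exact LinearMap.mem_ker.mp (ker_pow_mono g hk (hSK (hrows r)))
      rw [congrFun h5 c]
      rfl
  exact ⟨q, hq, P, J, M, P0, Ps, hPunit, hJunit, hPsum, hrankP0, hP0Ak, hPsprop⟩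
end

section
/- Let A ∈ ℝ^{N×N} and B ∈ ℝ^{N×m}, and let P_{(i)} ∈ ℝ^{N×N} satisfy P_{(i)}A^k = 0 for all k ≥ i and rank(P_{(i)}A^{i−1}) = rank(P_{(i)}), where i ≥ 1. Suppose that for every x ∈ ℝ^N there exist K ≥ i and nonnegative vectors u_1,…,u_K with x = Σ_{k=1}^K A^{K−k}Bu_k. Then the column space of P_{(i)} is contained in the positive span of the columns of P_{(i)}A^{i−1}B. -/
open Matrix

/-- If `P A^k = 0` for all `k ≥ i` (`i ≥ 1`), `rank(P A^{i−1}) = rank P`,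
and every `x ∈ ℝ^N` is reachable via nonnegative inputs in some `K ≥ i` steps, then the
column space of `P` is contained in the positive span of the columns of `P A^{i−1} B`. -/
theorem colSpace_subset_posSpan {N m i : ℕ} (hi : 1 ≤ i)
    (A : Matrix (Fin N) (Fin N) ℝ) (B : Matrix (Fin N) (Fin m) ℝ)
    (P : Matrix (Fin N) (Fin N) ℝ)
    (hnil : ∀ k : ℕ, i ≤ k → P * A ^ k = 0)
    (hrank : (P * A ^ (i - 1)).rank = P.rank)
    (hreach : ∀ x : Fin N → ℝ,
      ∃ K : ℕ, i ≤ K ∧ ∃ u : ℕ → Fin m → ℝ, (∀ k < K, 0 ≤ u k) ∧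
        x = ∑ k ∈ Finset.range K, (A ^ (K - 1 - k)) *ᵥ (B *ᵥ u k)) :
    {y : Fin N → ℝ | ∃ w : Fin N → ℝ, P *ᵥ w = y} ⊆
      {y | ∃ α : Fin m → ℝ, 0 ≤ α ∧ (P * A ^ (i - 1) * B) *ᵥ α = y} := by
  rintro y ⟨w, rfl⟩
  set Q := P * A ^ (i - 1) with hQ
  have hle : LinearMap.range Q.mulVecLin ≤ LinearMap.range P.mulVecLin := by
    rintro _ ⟨v, rfl⟩
    exact ⟨(A ^ (i - 1)).mulVecLin v, by
      simp [hQ, Matrix.mulVecLin_mul]⟩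
  have heq : LinearMap.range Q.mulVecLin = LinearMap.range P.mulVecLin :=
    Submodule.eq_of_le_of_finrank_eq hle hrank
  have hmem : P *ᵥ w ∈ LinearMap.range Q.mulVecLin := by
    rw [heq]; exact ⟨w, rfl⟩
  obtain ⟨z, hz⟩ := hmem
  obtain ⟨K, hK, u, hu, hzsum⟩ := hreach z
  refine ⟨u (K - 1), hu _ (by omega), ?_⟩
  have key : Q *ᵥ z = (Q * B) *ᵥ (u (K - 1)) := by
    rw [hzsum, show (Q *ᵥ ∑ k ∈ Finset.range K, A ^ (K - 1 - k) *ᵥ B *ᵥ u k) =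
      ∑ k ∈ Finset.range K, Q *ᵥ (A ^ (K - 1 - k) *ᵥ B *ᵥ u k) from by
        have := map_sum Q.mulVecLin (fun k => A ^ (K - 1 - k) *ᵥ B *ᵥ u k) (Finset.range K)
        simpa only [Matrix.mulVecLin_apply] using this]
    rw [Finset.sum_eq_single (K - 1)]
    · rw [Matrix.mulVec_mulVec, Matrix.mulVec_mulVec]
      have : K - 1 - (K - 1) = 0 := by omega
      rw [this, pow_zero, Matrix.mul_one]
    · intro k hk hne
      rw [Matrix.mulVec_mulVec, Matrix.mulVec_mulVec, hQ,
        Matrix.mul_assoc P _ _, ← pow_add]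
      have h1 : i ≤ i - 1 + (K - 1 - k) := by
        simp at hk; omega
      rw [hnil _ h1, Matrix.zero_mul, Matrix.zero_mulVec]
    · intro h
      exact absurd (Finset.mem_range.mpr (by omega)) h
  calc (Q * B) *ᵥ u (K - 1) = Q *ᵥ z := key.symm
    _ = P *ᵥ w := hz
end

section
/- Consider A = diag(−1, −1, 0) ∈ ℝ^{3×3} and B = [[1,0,0,0],[0,1,0,0],[0,0,1,−1]] ∈ ℝ^{3×4}. Then the vector z = (0,0,1)ᵀ is a left eigenvector of A with eigenvalue 0 and satisfies zᵀB = (0,0,1,−1), which is neither ≤ 0 nor = 0; however, for Φ = [[1,0,0,0],[0,1,1,0],[0,−1,−1,0],[0,0,0,1]], one has zᵀ(BΦ) = (0,−1,−1,−1) ≤ 0, so the pair (A, BΦ) violates the nonnegative controllability condition: there exist λ ≥ 0 and z ≠ 0 with zᵀA = λzᵀ and zᵀ(BΦ) ≤ 0. -/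
open Matrix

/-- for the explicit example `A = diag(−1,−1,0)`,
`B = [[1,0,0,0],[0,1,0,0],[0,0,1,−1]]` and the change of basis `Φ`, the vector
`z = (0,0,1)ᵀ` is a left eigenvector of `A` with eigenvalue `0`, `zᵀB = (0,0,1,−1)` is
neither `≤ 0` nor `= 0`, while `zᵀ(BΦ) = (0,−1,−1,−1) ≤ 0`, so `(A, BΦ)` violates the
nonnegative controllability condition. -/
theorem change_of_basis_counterexample
    (A : Matrix (Fin 3) (Fin 3) ℝ) (B : Matrix (Fin 3) (Fin 4) ℝ)
    (Φ : Matrix (Fin 4) (Fin 4) ℝ) (z : Fin 3 → ℝ)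
    (hA : A = !![-1, 0, 0; 0, -1, 0; 0, 0, 0])
    (hB : B = !![1, 0, 0, 0; 0, 1, 0, 0; 0, 0, 1, -1])
    (hΦ : Φ = !![1, 0, 0, 0; 0, 1, 1, 0; 0, -1, -1, 0; 0, 0, 0, 1])
    (hz : z = ![0, 0, 1]) :
    z ≠ 0 ∧
    z ᵥ* A = (0 : ℝ) • z ∧
    z ᵥ* B = ![0, 0, 1, -1] ∧
    ¬ (z ᵥ* B ≤ 0) ∧ z ᵥ* B ≠ 0 ∧
    z ᵥ* (B * Φ) = ![0, -1, -1, -1] ∧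
    z ᵥ* (B * Φ) ≤ 0 ∧
    (∃ (lam : ℝ) (w : Fin 3 → ℝ), 0 ≤ lam ∧ w ≠ 0 ∧
      w ᵥ* A = lam • w ∧ w ᵥ* (B * Φ) ≤ 0) := by
  subst hA hB hΦ hz
  have hM : (!![1, 0, 0, 0; 0, 1, 0, 0; 0, 0, 1, -1] : Matrix (Fin 3) (Fin 4) ℝ) *
      (!![1, 0, 0, 0; 0, 1, 1, 0; 0, -1, -1, 0; 0, 0, 0, 1] : Matrix (Fin 4) (Fin 4) ℝ) =
      !![1, 0, 0, 0; 0, 1, 1, 0; 0, -1, -1, -1] := by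
    funext i j
    fin_cases i <;> fin_cases j <;>
      norm_num [Matrix.mul_apply, Fin.sum_univ_succ]
  have hzne : (![0, 0, 1] : Fin 3 → ℝ) ≠ 0 := by
    intro h
    have := congrFun h 2
    change (1:ℝ) = 0 at this
    norm_num at this
  have hzA : (![0, 0, 1] : Fin 3 → ℝ) ᵥ* !![-1, 0, 0; 0, -1, 0; 0, 0, 0] =
      (0 : ℝ) • ![0, 0, 1] := by
    funext i; fin_cases i <;> simp [vecMul, dotProduct, Fin.sum_univ_succ]
  have hzB : (![0, 0, 1] : Fin 3 → ℝ) ᵥ* !![1, 0, 0, 0; 0, 1, 0, 0; 0, 0, 1, -1] =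
      ![0, 0, 1, -1] := by
    funext i; fin_cases i <;> simp [vecMul, dotProduct, Fin.sum_univ_succ]
  have hBΦ : (![0, 0, 1] : Fin 3 → ℝ) ᵥ*
      ((!![1, 0, 0, 0; 0, 1, 0, 0; 0, 0, 1, -1] : Matrix (Fin 3) (Fin 4) ℝ) *
        (!![1, 0, 0, 0; 0, 1, 1, 0; 0, -1, -1, 0; 0, 0, 0, 1] : Matrix (Fin 4) (Fin 4) ℝ)) = ![0, -1, -1, -1] := by
    rw [hM]
    funext i; fin_cases i <;> simp [vecMul, dotProduct, Fin.sum_univ_succ]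
  have hle : (![0, -1, -1, -1] : Fin 4 → ℝ) ≤ 0 := by
    intro i; fin_cases i <;> norm_num
  refine ⟨hzne, hzA, hzB, ?_, ?_, hBΦ, hBΦ ▸ hle, ⟨0, ![0,0,1], le_refl 0, hzne, hzA, hBΦ ▸ hle⟩⟩
  · rw [hzB]; intro h
    have := h 2
    change (1:ℝ) ≤ 0 at this
    norm_num at this
  · rw [hzB]; intro h
    have := congrFun h 2
    change (1:ℝ) = 0 at this
    norm_num at this
end
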